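/- Every partial representation of the universal enveloping algebra U(g) of a Lie algebra g is an algebra morphism. Consequently, U(g)_par ≅ U(g). -/

import Mathlib

open TensorProduct BigOperators HopfAlgebra

variable (k : Type) [CommRing k] (H : Type) [Ring H] [HopfAlgebra k H]

/-- `sw f g : H → T(H)` is the Sweedler convolution `x ↦ ∑ f(x₍₁₎) * g(x₍₂₎)`. -/
noncomputable def sw (f g : H →ₗ[k] TensorAlgebra k H) : H →ₗ[k] TensorAlgebra k H :=
  (LinearMap.mul' k (TensorAlgebra k H)) ∘ₗ (TensorProduct.map f g) ∘ₗ
    (Coalgebra.comul (R := k))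

/-- The defining relations of the universal partial "Hopf" algebra `H_par`,
imposed on the tensor algebra `T(H)`. -/
inductive HparRel : TensorAlgebra k H → TensorAlgebra k H → Prop
  | one : HparRel (TensorAlgebra.ι k (1 : H)) 1
  | pr2 (h x : H) : HparRel
      (TensorAlgebra.ι k h *
        sw k H (TensorAlgebra.ι k) ((TensorAlgebra.ι k) ∘ₗ antipode (R := k)) x)
      (sw k H ((TensorAlgebra.ι k) ∘ₗ LinearMap.mulLeft k h)
        ((TensorAlgebra.ι k) ∘ₗ antipode (R := k)) x)
  | pr3 (h x : H) : HparRel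
      (sw k H (TensorAlgebra.ι k) ((TensorAlgebra.ι k) ∘ₗ antipode (R := k)) h *
        TensorAlgebra.ι k x)
      (sw k H (TensorAlgebra.ι k)
        ((TensorAlgebra.ι k) ∘ₗ (LinearMap.mulRight k x) ∘ₗ antipode (R := k)) h)
  | pr4 (h x : H) : HparRel
      (TensorAlgebra.ι k h *
        sw k H ((TensorAlgebra.ι k) ∘ₗ antipode (R := k)) (TensorAlgebra.ι k) x)
      (sw k H ((TensorAlgebra.ι k) ∘ₗ (LinearMap.mulLeft k h) ∘ₗ antipode (R := k))
        (TensorAlgebra.ι k) x)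
  | pr5 (h x : H) : HparRel
      (sw k H ((TensorAlgebra.ι k) ∘ₗ antipode (R := k)) (TensorAlgebra.ι k) h *
        TensorAlgebra.ι k x)
      (sw k H ((TensorAlgebra.ι k) ∘ₗ antipode (R := k))
        ((TensorAlgebra.ι k) ∘ₗ LinearMap.mulRight k x) h)

/-- The universal partial "Hopf" algebra `H_par` of a Hopf algebra `H`. -/
abbrev Hpar : Type := RingQuot (HparRel k H)

/-- The canonical (universal) partial representation `h ↦ [h]` of `H` on `H_par`. -/
noncomputable def bracket : H →ₗ[k] Hpar k H :=
  (RingQuot.mkAlgHom k (HparRel k H)).toLinearMap ∘ₗ TensorAlgebra.ι k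

/-- A partial representation of a Hopf algebra `H` on an algebra `B` (axioms (PR1)-(PR5)),
stated using arbitrary finite Sweedler decompositions of the comultiplication. -/
def IsPartialRep {H : Type} [Ring H] [HopfAlgebra k H]
    {B : Type} [Ring B] [Algebra k B] (π : H →ₗ[k] B) : Prop :=
  π 1 = 1 ∧
  (∀ (h x : H) (n : ℕ) (x1 x2 : Fin n → H),
    Coalgebra.comul (R := k) x = ∑ i, x1 i ⊗ₜ[k] x2 i →
    π h * ∑ i, π (x1 i) * π (antipode (R := k) (x2 i)) =
      ∑ i, π (h * x1 i) * π (antipode (R := k) (x2 i))) ∧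
  (∀ (h x : H) (n : ℕ) (h1 h2 : Fin n → H),
    Coalgebra.comul (R := k) h = ∑ i, h1 i ⊗ₜ[k] h2 i →
    (∑ i, π (h1 i) * π (antipode (R := k) (h2 i))) * π x =
      ∑ i, π (h1 i) * π (antipode (R := k) (h2 i) * x)) ∧
  (∀ (h x : H) (n : ℕ) (x1 x2 : Fin n → H),
    Coalgebra.comul (R := k) x = ∑ i, x1 i ⊗ₜ[k] x2 i →
    π h * ∑ i, π (antipode (R := k) (x1 i)) * π (x2 i) =
      ∑ i, π (h * antipode (R := k) (x1 i)) * π (x2 i)) ∧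
  (∀ (h x : H) (n : ℕ) (h1 h2 : Fin n → H),
    Coalgebra.comul (R := k) h = ∑ i, h1 i ⊗ₜ[k] h2 i →
    (∑ i, π (antipode (R := k) (h1 i)) * π (h2 i)) * π x =
      ∑ i, π (antipode (R := k) (h1 i)) * π (h2 i * x))

section Auxiliary

lemma antipode_one' : antipode (R := k) (1 : H) = 1 := by
  have h := HopfAlgebra.mul_antipode_rTensor_comul_apply (R := k) (A := H) 1
  simpa [Algebra.TensorProduct.one_def] using h

lemma sw_apply (f g : H →ₗ[k] TensorAlgebra k H) (x : H) {n : ℕ} (x1 x2 : Fin n → H)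
    (hx : Coalgebra.comul (R := k) x = ∑ i, x1 i ⊗ₜ[k] x2 i) :
    sw k H f g x = ∑ i, f (x1 i) * g (x2 i) := by
  simp [sw, hx, map_sum]

/-- The algebra map `T(H) → H` sending `ι h` to `h`. -/
noncomputable def phi0 : TensorAlgebra k H →ₐ[k] H :=
  TensorAlgebra.lift k (LinearMap.id : H →ₗ[k] H)

@[simp] lemma phi0_ι (x : H) : phi0 k H (TensorAlgebra.ι k x) = x := by
  simp [phi0]

lemma phi0_rel : ∀ ⦃a b : TensorAlgebra k H⦄, HparRel k H a b → phi0 k H a = phi0 k H b := by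
  intro a b r
  induction r with
  | one => simp
  | pr2 h x =>
      simp only [sw, LinearMap.comp_apply, map_mul, phi0_ι]
      generalize Coalgebra.comul (R := k) x = u
      induction u using TensorProduct.induction_on with
      | zero => simp
      | tmul a b => simp [mul_assoc]
      | add u v hu hv => simp only [map_add, mul_add, hu, hv]
  | pr3 h x =>
      simp only [sw, LinearMap.comp_apply, map_mul, phi0_ι]
      generalize Coalgebra.comul (R := k) h = u
      induction u using TensorProduct.induction_on with
      | zero => simp
      | tmul a b => simp [mul_assoc]
      | add u v hu hv => simp only [map_add, add_mul, hu, hv]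
  | pr4 h x =>
      simp only [sw, LinearMap.comp_apply, map_mul, phi0_ι]
      generalize Coalgebra.comul (R := k) x = u
      induction u using TensorProduct.induction_on with
      | zero => simp
      | tmul a b => simp [mul_assoc]
      | add u v hu hv => simp only [map_add, mul_add, hu, hv]
  | pr5 h x =>
      simp only [sw, LinearMap.comp_apply, map_mul, phi0_ι]
      generalize Coalgebra.comul (R := k) h = u
      induction u using TensorProduct.induction_on with
      | zero => simp
      | tmul a b => simp [mul_assoc]
      | add u v hu hv => simp only [map_add, add_mul, hu, hv]

/-- The algebra map `H_par → H` induced by `phi0`. -/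
noncomputable def PhiMap : Hpar k H →ₐ[k] H :=
  RingQuot.liftAlgHom k ⟨phi0 k H, phi0_rel k H⟩

@[simp] lemma PhiMap_bracket (x : H) : PhiMap k H (bracket k H x) = x := by
  simp [PhiMap, bracket, RingQuot.liftAlgHom_mkAlgHom_apply]

lemma bracket_one : bracket k H (1 : H) = 1 := by
  have := RingQuot.mkAlgHom_rel k (HparRel.one (k := k) (H := H))
  simpa [bracket] using this

lemma bracket_isPartialRep : IsPartialRep k (bracket k H) := by
  refine ⟨bracket_one k H, ?_, ?_, ?_, ?_⟩
  · intro h x n x1 x2 hx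
    have r := RingQuot.mkAlgHom_rel k (HparRel.pr2 (k := k) (H := H) h x)
    rw [sw_apply k H _ _ x x1 x2 hx, sw_apply k H _ _ x x1 x2 hx] at r
    simpa [bracket, map_sum] using r
  · intro h x n h1 h2 hh
    have r := RingQuot.mkAlgHom_rel k (HparRel.pr3 (k := k) (H := H) h x)
    rw [sw_apply k H _ _ h h1 h2 hh, sw_apply k H _ _ h h1 h2 hh] at r
    simpa [bracket, map_sum] using r
  · intro h x n x1 x2 hx
    have r := RingQuot.mkAlgHom_rel k (HparRel.pr4 (k := k) (H := H) h x)
    rw [sw_apply k H _ _ x x1 x2 hx, sw_apply k H _ _ x x1 x2 hx] at r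
    simpa [bracket, map_sum] using r
  · intro h x n h1 h2 hh
    have r := RingQuot.mkAlgHom_rel k (HparRel.pr5 (k := k) (H := H) h x)
    rw [sw_apply k H _ _ h h1 h2 hh, sw_apply k H _ _ h h1 h2 hh] at r
    simpa [bracket, map_sum] using r

end Auxiliary

section UeaAux

attribute [local instance] LieRing.ofAssociativeRing

set_option synthInstance.maxHeartbeats 1000000 in
set_option maxHeartbeats 1000000 in
lemma uea_adjoin_eq_top (k L : Type) [CommRing k] [LieRing L] [LieAlgebra k L] :
    Algebra.adjoin k (Set.range (UniversalEnvelopingAlgebra.ι k (L := L))) = ⊤ := by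
  set S := Algebra.adjoin k (Set.range (UniversalEnvelopingAlgebra.ι k (L := L))) with hS
  let j : L →ₗ⁅k⁆ S :=
    { toFun := fun X => ⟨UniversalEnvelopingAlgebra.ι k X, Algebra.subset_adjoin ⟨X, rfl⟩⟩
      map_add' := fun X Y => Subtype.ext (by simp)
      map_smul' := fun c X => Subtype.ext (by simp)
      map_lie' := fun {X Y} => Subtype.ext (by
        simp [LieRing.of_associative_ring_bracket]) }
  let g := UniversalEnvelopingAlgebra.lift k j
  have hcomp : (S.val.comp g) = AlgHom.id k (UniversalEnvelopingAlgebra k L) := by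
    apply UniversalEnvelopingAlgebra.hom_ext
    ext X
    simp [g, UniversalEnvelopingAlgebra.lift_ι_apply, j]
  rw [eq_top_iff]
  intro a _
  have := AlgHom.congr_fun hcomp a
  simp only [AlgHom.coe_comp, Function.comp_apply, AlgHom.coe_id, id_eq, Subalgebra.coe_val] at this
  rw [← this]
  exact (g a).2

end UeaAux

/-- For the universal enveloping algebra `U(g)` of a Lie algebra `g` —
formalized as a Hopf algebra `U` whose underlying algebra is `U(g)` (via an algebra
isomorphism `f`), in which the generators `f(ι X)` are primitive, `S(f(ι X)) = -f(ι X)`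
and `ε(f(ι X)) = 0` — every partial representation of `U` is an algebra morphism;
consequently `U(g)_par ≅ U(g)` as algebras. -/
theorem universalEnveloping_partialRep_is_morphism (k : Type) [CommRing k]
    (L : Type) [LieRing L] [LieAlgebra k L]
    (U : Type) [Ring U] [HopfAlgebra k U]
    (f : UniversalEnvelopingAlgebra k L ≃ₐ[k] U)
    (hcomul : ∀ X : L, Coalgebra.comul (R := k) (f (UniversalEnvelopingAlgebra.ι k X)) =
      (f (UniversalEnvelopingAlgebra.ι k X)) ⊗ₜ[k] (1 : U) +
        (1 : U) ⊗ₜ[k] (f (UniversalEnvelopingAlgebra.ι k X)))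
    (hcounit : ∀ X : L,
      Coalgebra.counit (R := k) (A := U) (f (UniversalEnvelopingAlgebra.ι k X)) = 0)
    (hantipode : ∀ X : L, antipode (R := k) (f (UniversalEnvelopingAlgebra.ι k X)) =
      - f (UniversalEnvelopingAlgebra.ι k X)) :
    (∀ (B : Type) (_ : Ring B) (_ : Algebra k B), ∀ π : U →ₗ[k] B, IsPartialRep k π →
        ∀ h x : U, π h * π x = π (h * x)) ∧
    Nonempty (Hpar k U ≃ₐ[k] U) := by
  have part1 : ∀ (B : Type) (_ : Ring B) (_ : Algebra k B), ∀ π : U →ₗ[k] B, IsPartialRep k π →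
      ∀ h x : U, π h * π x = π (h * x) := by
    intro B _ _ π hπ
    obtain ⟨h1, h2, -, -, -⟩ := hπ
    have hS1 : antipode (R := k) (1 : U) = 1 := antipode_one' k U
    let S : Subalgebra k U :=
      { carrier := {x | ∀ h : U, π h * π x = π (h * x)}
        mul_mem' := by
          intro a b ha hb h
          have hab : π (a * b) = π a * π b := (hb a).symm
          rw [hab, ← mul_assoc, ha h, hb (h * a), mul_assoc]
        one_mem' := by intro h; simp [h1]
        add_mem' := by intro a b ha hb h; simp [map_add, mul_add, ha h, hb h]
        algebraMap_mem' := by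
          intro c h
          simp [Algebra.algebraMap_eq_smul_one, map_smul, h1, mul_smul_comm] }
    have hgen : ∀ X : L, f (UniversalEnvelopingAlgebra.ι k X) ∈ S := by
      intro X h
      set x := f (UniversalEnvelopingAlgebra.ι k X) with hx
      have hd : Coalgebra.comul (R := k) x = ∑ i : Fin 2, ![x, 1] i ⊗ₜ[k] ![(1 : U), x] i := by
        rw [Fin.sum_univ_two]; simp only [Matrix.cons_val_zero, Matrix.cons_val_one, Matrix.head_cons]; exact hcomul X
      have key := h2 h x 2 ![x, 1] ![(1 : U), x] hd
      simp only [Fin.sum_univ_two, Matrix.cons_val_zero, Matrix.cons_val_one, Matrix.head_cons,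
        hS1, h1, mul_one, one_mul] at key
      rw [mul_add] at key
      exact add_right_cancel key
    have htop : ∀ u : U, u ∈ S := by
      intro u
      have hsub : (Algebra.adjoin k
          (Set.range (UniversalEnvelopingAlgebra.ι k (L := L)))).map f.toAlgHom ≤ S := by
        rw [AlgHom.map_adjoin]
        apply Algebra.adjoin_le
        rintro _ ⟨_, ⟨X, rfl⟩, rfl⟩
        exact hgen X
      apply hsub
      refine ⟨f.symm u, ?_, by simp⟩
      rw [uea_adjoin_eq_top]; trivial
    intro h x
    exact htop x h
  refine ⟨part1, ?_⟩
  have hmul := part1 (Hpar k U) inferInstance inferInstance (bracket k U)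
    (bracket_isPartialRep k U)
  let Ψ : U →ₐ[k] Hpar k U :=
    AlgHom.ofLinearMap (bracket k U) (bracket_one k U) (fun a b => (hmul a b).symm)
  refine ⟨AlgEquiv.ofAlgHom (PhiMap k U) Ψ ?_ ?_⟩
  · apply AlgHom.ext; intro u
    show PhiMap k U (bracket k U u) = u
    simp
  · apply RingQuot.ringQuot_ext'
    apply TensorAlgebra.hom_ext
    apply LinearMap.ext; intro u
    show Ψ (PhiMap k U ((RingQuot.mkAlgHom k (HparRel k U)) (TensorAlgebra.ι k u))) = _
    have h1 : PhiMap k U ((RingQuot.mkAlgHom k (HparRel k U)) (TensorAlgebra.ι k u)) = u := by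
      simp [PhiMap, RingQuot.liftAlgHom_mkAlgHom_apply]
    rw [h1]
    show bracket k U u = _
    simp [bracket]
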